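/- Let m ≥ 1 and D ≥ 2 be integers and α_1,…,α_{D−1} reals with 1 ≤ α_k ≤ m. Then the equation T = (1/(m+1))·ln((m+1)T + 1) + Σ_{k=1}^{D−1} (1/α_k)·ln((mT + 1)/((m − α_k)T + 1)) has exactly one solution T > 0 (the only other nonnegative solution being T = 0). -/

import Mathlib

set_option maxHeartbeats 1000000

open Real Set Finset

private lemma key (a : ℝ) (ha : 1 ≤ a) (S : Finset ℕ) (hS : S.Nonempty)
    (α : ℕ → ℝ) (hα : ∀ k ∈ S, 1 ≤ α k ∧ α k ≤ a) :
    ∃! T : ℝ, 0 < T ∧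
      T = (1 / (a + 1)) * Real.log ((a + 1) * T + 1) +
        ∑ k ∈ S, (1 / α k) * (Real.log (a * T + 1) - Real.log ((a - α k) * T + 1)) := by
  set f : ℝ → ℝ := fun T => (1 / (a + 1)) * Real.log ((a + 1) * T + 1) +
      ∑ k ∈ S, (1 / α k) * (Real.log (a * T + 1) - Real.log ((a - α k) * T + 1)) with hfdef
  set g : ℝ → ℝ := fun T => f T - T with hgdef
  set F : ℝ → ℝ := fun x => 1 / ((a + 1) * x + 1) +
      ∑ k ∈ S, 1 / ((a * x + 1) * ((a - α k) * x + 1)) with hFdef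
  -- basic positivity
  have hpos : ∀ x : ℝ, 0 ≤ x → ∀ c : ℝ, 0 ≤ c → (0:ℝ) < c * x + 1 := by
    intro x hx c hc; nlinarith
  -- derivative of g
  have hderiv : ∀ x : ℝ, 0 ≤ x → HasDerivAt g (F x - 1) x := by
    intro x hx
    have haff : ∀ c : ℝ, 0 ≤ c →
        HasDerivAt (fun T : ℝ => Real.log (c * T + 1)) (c / (c * x + 1)) x := by
      intro c hc
      have h1 : HasDerivAt (fun T : ℝ => c * T + 1) c x := by
        simpa using ((hasDerivAt_id x).const_mul c).add_const 1
      simpa using h1.log (ne_of_gt (hpos x hx c hc))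
    have h0 : HasDerivAt (fun T : ℝ => (1 / (a + 1)) * Real.log ((a + 1) * T + 1))
        (1 / ((a + 1) * x + 1)) x := by
      have := (haff (a + 1) (by linarith)).const_mul (1 / (a + 1))
      refine this.congr_deriv ?_
      rw [← mul_div_assoc, one_div_mul_cancel (by linarith : a + 1 ≠ 0)]
    have hsum : HasDerivAt (fun T : ℝ => ∑ k ∈ S,
        (1 / α k) * (Real.log (a * T + 1) - Real.log ((a - α k) * T + 1)))
        (∑ k ∈ S, 1 / ((a * x + 1) * ((a - α k) * x + 1))) x := by
      apply HasDerivAt.fun_sum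
      intro k hk
      obtain ⟨hk1, hk2⟩ := hα k hk
      have hc1 : (0:ℝ) ≤ a := by linarith
      have hc2 : (0:ℝ) ≤ a - α k := by linarith
      have := ((haff a hc1).sub (haff (a - α k) hc2)).const_mul (1 / α k)
      refine this.congr_deriv ?_
      have hαk : α k ≠ 0 := by linarith
      have hd1 : a * x + 1 ≠ 0 := ne_of_gt (hpos x hx a hc1)
      have hd2 : (a - α k) * x + 1 ≠ 0 := ne_of_gt (hpos x hx _ hc2)
      field_simp
      ring
    have := (h0.fun_add hsum).fun_sub (hasDerivAt_id' x)
    simpa [hgdef, hfdef, hFdef] using this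
  have hcont : ContinuousOn g (Ici 0) := fun x hx =>
    (hderiv x hx).differentiableAt.continuousAt.continuousWithinAt
  have hderiv' : ∀ x ∈ Ioi (0:ℝ), deriv g x = F x - 1 := fun x hx => (hderiv x hx.le).deriv
  -- F strictly antitone on Ici 0
  have hF : StrictAntiOn F (Ici 0) := by
    intro x hx y hy hxy
    simp only [hFdef]
    apply add_lt_add_of_lt_of_le
    · apply one_div_lt_one_div_of_lt
      · exact hpos x hx (a + 1) (by linarith)
      · nlinarith
    · apply Finset.sum_le_sum
      intro k hk
      obtain ⟨hk1, hk2⟩ := hα k hk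
      have hc2 : (0:ℝ) ≤ a - α k := by linarith
      apply one_div_le_one_div_of_le
      · exact mul_pos (hpos x hx a (by linarith)) (hpos x hx _ hc2)
      · have h1 : a * x + 1 ≤ a * y + 1 := by nlinarith
        have h2 : (a - α k) * x + 1 ≤ (a - α k) * y + 1 := by nlinarith
        have p1 : (0:ℝ) < a * x + 1 := hpos x hx a (by linarith)
        have p2 : (0:ℝ) < (a - α k) * x + 1 := hpos x hx _ hc2
        nlinarith
  -- strict concavity of g on Ici 0
  have hconc : StrictConcaveOn ℝ (Ici 0) g := by
    apply StrictAntiOn.strictConcaveOn_of_deriv (convex_Ici 0) hcont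
    rw [interior_Ici]
    intro x hx y hy hxy
    rw [hderiv' x hx, hderiv' y hy]
    have := hF (Set.mem_Ici.mpr (le_of_lt (Set.mem_Ioi.mp hx))) (Set.mem_Ici.mpr (le_of_lt (Set.mem_Ioi.mp hy))) hxy
    linarith
  have hg0 : g 0 = 0 := by
    simp [hgdef, hfdef]
  -- uniqueness of a positive root
  have huniq : ∀ x y : ℝ, 0 < x → 0 < y → g x = 0 → g y = 0 → x = y := by
    have main : ∀ x y : ℝ, 0 < x → 0 < y → g x = 0 → g y = 0 → x < y → False := by
      intro x y hx hy hgx hgy hxy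
      have hyne : y ≠ 0 := ne_of_gt hy
      have hw1 : (0:ℝ) < (y - x) / y := div_pos (by linarith) hy
      have hw2 : (0:ℝ) < x / y := div_pos hx hy
      have hw : (y - x) / y + x / y = 1 := by
        rw [← add_div, sub_add_cancel, div_self hyne]
      have hc := hconc.2 (Set.self_mem_Ici : (0:ℝ) ∈ Set.Ici 0)
        (le_of_lt hy : y ∈ Set.Ici 0) hy.ne hw1 hw2 hw
      simp only [smul_eq_mul, mul_zero, zero_add] at hc
      rw [div_mul_cancel₀ x hyne, hg0, hgx, hgy, mul_zero, mul_zero, add_zero] at hc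
      exact lt_irrefl 0 hc
    intro x y hx hy hgx hgy
    rcases lt_trichotomy x y with h | h | h
    · exact absurd (main x y hx hy hgx hgy h) (by simp)
    · exact h
    · exact absurd (main y x hy hx hgy hgx h) (by simp)
  -- positivity of g near 0 : g δ > 0 with δ = 1/(3*(a+1))
  set δ : ℝ := 1 / (3 * (a + 1)) with hδdef
  have hδpos : 0 < δ := by positivity
  have hFpos : ∀ x : ℝ, 0 < x → x ≤ δ → 1 < F x := by
    intro x hx hxδ
    obtain ⟨k₀, hk₀⟩ := hS
    obtain ⟨h1, h2⟩ := hα k₀ hk₀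
    set u : ℝ := (a + 1) * x + 1 with hudef
    have hu1 : 1 < u := by nlinarith
    have hu2 : u ≤ 4 / 3 := by
      have : (a + 1) * x ≤ (a + 1) * δ := by nlinarith
      have hδval : (a + 1) * δ = 1 / 3 := by
        rw [hδdef]; field_simp
      simp only [hudef]; linarith [hδval ▸ this]
    have hprod : (a * x + 1) * ((a - α k₀) * x + 1) ≤ u ^ 2 := by
      have p1 : a * x + 1 ≤ u := by simp only [hudef]; nlinarith
      have p2 : (a - α k₀) * x + 1 ≤ u := by simp only [hudef]; nlinarith
      have q1 : (0:ℝ) < a * x + 1 := hpos x hx.le a (by linarith)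
      have q2 : (0:ℝ) < (a - α k₀) * x + 1 := hpos x hx.le _ (by linarith)
      nlinarith
    have hterm : 1 / u ^ 2 ≤ 1 / ((a * x + 1) * ((a - α k₀) * x + 1)) := by
      apply one_div_le_one_div_of_le
      · exact mul_pos (hpos x hx.le a (by linarith)) (hpos x hx.le _ (by linarith))
      · exact hprod
    have hsum : 1 / ((a * x + 1) * ((a - α k₀) * x + 1)) ≤
        ∑ k ∈ S, 1 / ((a * x + 1) * ((a - α k) * x + 1)) := by
      apply Finset.single_le_sum _ hk₀
      intro k hk
      obtain ⟨g1, g2⟩ := hα k hk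
      have := mul_pos (hpos x hx.le a (by linarith)) (hpos x hx.le (a - α k) (by linarith))
      positivity
    have hkey : 1 < 1 / u + 1 / u ^ 2 := by
      rw [div_add_div _ _ (by nlinarith : u ≠ 0) (by nlinarith : u ^ 2 ≠ 0)]
      rw [lt_div_iff₀ (by nlinarith)]
      nlinarith
    have : 1 / u + 1 / u ^ 2 ≤ F x := by
      simp only [hFdef, hudef]
      have := hterm.trans hsum
      simp only [hudef] at this
      linarith
    exact lt_of_lt_of_le hkey this
  have hmono : StrictMonoOn g (Icc 0 δ) := by
    apply strictMonoOn_of_deriv_pos (convex_Icc 0 δ)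
    · exact hcont.mono (Icc_subset_Ici_self)
    · intro x hx
      rw [interior_Icc] at hx
      rw [hderiv' x hx.1]
      have hh := hFpos x hx.1 hx.2.le
      linarith only [hh]
  have hgδ : 0 < g δ := by
    have := hmono (left_mem_Icc.mpr hδpos.le) (right_mem_Icc.mpr hδpos.le) hδpos
    rwa [hg0] at this
  -- negativity of g at a large point
  set N : ℝ := (S.card : ℝ) + 1 with hNdef
  have hN2 : (2:ℝ) ≤ N := by
    have : 1 ≤ S.card := Finset.card_pos.mpr hS
    have : (1:ℝ) ≤ (S.card : ℝ) := by exact_mod_cast this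
    simp only [hNdef]; linarith
  have hub : ∀ T : ℝ, 0 ≤ T → g T ≤ N * Real.log ((a + 1) * T + 1) - T := by
    intro T hT
    have hlogA : 0 ≤ Real.log ((a + 1) * T + 1) := by
      apply Real.log_nonneg; nlinarith
    have h1 : (1 / (a + 1)) * Real.log ((a + 1) * T + 1) ≤ Real.log ((a + 1) * T + 1) := by
      have : 1 / (a + 1) ≤ 1 := by
        rw [div_le_one (by linarith)]; linarith
      nlinarith
    have h2 : ∀ k ∈ S, (1 / α k) * (Real.log (a * T + 1) - Real.log ((a - α k) * T + 1)) ≤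
        Real.log ((a + 1) * T + 1) := by
      intro k hk
      obtain ⟨g1, g2⟩ := hα k hk
      have l1 : 0 ≤ Real.log (a * T + 1) := by apply Real.log_nonneg; nlinarith
      have l2 : 0 ≤ Real.log ((a - α k) * T + 1) := by apply Real.log_nonneg; nlinarith
      have l3 : Real.log (a * T + 1) ≤ Real.log ((a + 1) * T + 1) := by
        apply Real.log_le_log (by nlinarith); nlinarith
      have l4 : 1 / α k ≤ 1 := by rw [div_le_one (by linarith)]; linarith
      have l0 : Real.log ((a - α k) * T + 1) ≤ Real.log (a * T + 1) := by
        apply Real.log_le_log (by nlinarith); nlinarith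
      calc (1 / α k) * (Real.log (a * T + 1) - Real.log ((a - α k) * T + 1))
          ≤ 1 * (Real.log (a * T + 1) - Real.log ((a - α k) * T + 1)) :=
            mul_le_mul_of_nonneg_right l4 (by linarith)
        _ ≤ Real.log ((a + 1) * T + 1) := by linarith
    have h3 : ∑ k ∈ S, (1 / α k) * (Real.log (a * T + 1) - Real.log ((a - α k) * T + 1)) ≤
        (S.card : ℝ) * Real.log ((a + 1) * T + 1) := by
      calc _ ≤ ∑ _k ∈ S, Real.log ((a + 1) * T + 1) := Finset.sum_le_sum h2
        _ = (S.card : ℝ) * Real.log ((a + 1) * T + 1) := by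
            rw [Finset.sum_const, nsmul_eq_mul]
    simp only [hgdef, hfdef, hNdef]
    push_cast
    linarith
  set s : ℝ := 2 * N * Real.sqrt (a + 2) + 1 with hsdef
  have hsq : (1:ℝ) ≤ Real.sqrt (a + 2) := Real.one_le_sqrt.mpr (by linarith)
  have hs5 : (5:ℝ) ≤ s := by simp only [hsdef]; nlinarith
  set T₂ : ℝ := s ^ 2 with hT₂def
  have hT₂1 : (1:ℝ) ≤ T₂ := by simp only [hT₂def]; nlinarith
  have hsqrtT₂ : Real.sqrt T₂ = s := by
    rw [hT₂def, Real.sqrt_sq (by linarith)]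
  have hgT₂ : g T₂ < 0 := by
    have hub' := hub T₂ (by linarith)
    have hlog1 : Real.log ((a + 1) * T₂ + 1) ≤ Real.log ((a + 2) * T₂) := by
      apply Real.log_le_log (by nlinarith)
      nlinarith
    have hv : (0:ℝ) < (a + 2) * T₂ := by nlinarith
    have hlog2 : Real.log ((a + 2) * T₂) ≤ 2 * Real.sqrt ((a + 2) * T₂) - 2 := by
      have h := Real.log_le_sub_one_of_pos (Real.sqrt_pos.mpr hv)
      have h2 := Real.log_sqrt hv.le
      linarith
    have hsqm : Real.sqrt ((a + 2) * T₂) = Real.sqrt (a + 2) * s := by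
      rw [Real.sqrt_mul (by linarith), hsqrtT₂]
    have hbound : N * Real.log ((a + 1) * T₂ + 1) < T₂ := by
      have c1 : N * Real.log ((a + 1) * T₂ + 1) ≤ N * (2 * Real.sqrt (a + 2) * s - 2) := by
        apply mul_le_mul_of_nonneg_left _ (by linarith)
        rw [hsqm] at hlog2
        linarith
      have c2 : N * (2 * Real.sqrt (a + 2) * s - 2) = (s - 1) * s - 2 * N := by
        simp only [hsdef]; ring
      have : (s - 1) * s - 2 * N < s ^ 2 := by nlinarith
      simp only [hT₂def]
      linarith
    linarith
  -- existence via IVT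
  have hδT₂ : δ ≤ T₂ := by
    have : δ ≤ 1 / 3 := by
      rw [hδdef]
      exact one_div_le_one_div_of_le (by norm_num) (by linarith)
    linarith
  have hsub : Icc δ T₂ ⊆ Ici 0 := fun x hx => le_trans hδpos.le hx.1
  have hivt := intermediate_value_Icc' hδT₂ (hcont.mono hsub)
  have h0mem : (0:ℝ) ∈ Icc (g T₂) (g δ) := ⟨hgT₂.le, hgδ.le⟩
  obtain ⟨c, hcmem, hgc⟩ := hivt h0mem
  have hcpos : 0 < c := lt_of_lt_of_le hδpos hcmem.1
  refine ⟨c, ⟨hcpos, ?_⟩, ?_⟩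
  · have h : f c - c = 0 := hgc
    show c = f c
    linarith
  · rintro y ⟨hy, hyeq⟩
    have hfy : f y = y := hyeq.symm
    have hgy : g y = 0 := by show f y - y = 0; rw [hfy, sub_self]
    exact huniq y c hy hcpos hgy hgc

/-- Equation (20): the equation
`T = (1/(m+1)) ln((m+1)T + 1) + ∑_{k=1}^{D-1} (1/α_k) ln((mT+1)/((m-α_k)T+1))`
has exactly one positive solution. -/
theorem stmt11 (m D : ℕ) (hm : 1 ≤ m) (hD : 2 ≤ D)
    (α : ℕ → ℝ) (hα : ∀ k ∈ Finset.Icc 1 (D - 1), 1 ≤ α k ∧ α k ≤ (m : ℝ)) :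
    ∃! T : ℝ, 0 < T ∧
      T = (1 / ((m : ℝ) + 1)) * Real.log (((m : ℝ) + 1) * T + 1) +
        ∑ k ∈ Finset.Icc 1 (D - 1),
          (1 / α k) * Real.log (((m : ℝ) * T + 1) / (((m : ℝ) - α k) * T + 1)) := by
  have hm1 : (1:ℝ) ≤ (m:ℝ) := by exact_mod_cast hm
  have hSne : (Finset.Icc 1 (D - 1)).Nonempty := ⟨1, Finset.mem_Icc.mpr ⟨le_refl 1, by omega⟩⟩
  have hk := key (m:ℝ) hm1 (Finset.Icc 1 (D - 1)) hSne α hα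
  have hcongr : ∀ T : ℝ, 0 ≤ T →
      ∑ k ∈ Finset.Icc 1 (D - 1),
          (1 / α k) * Real.log (((m : ℝ) * T + 1) / (((m : ℝ) - α k) * T + 1)) =
      ∑ k ∈ Finset.Icc 1 (D - 1),
          (1 / α k) * (Real.log ((m:ℝ) * T + 1) - Real.log (((m:ℝ) - α k) * T + 1)) := by
    intro T hT
    apply Finset.sum_congr rfl
    intro k hk'
    obtain ⟨h1, h2⟩ := hα k hk'
    have p1 : (0:ℝ) < (m:ℝ) * T + 1 := by nlinarith
    have p2 : (0:ℝ) < ((m:ℝ) - α k) * T + 1 := by nlinarith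
    rw [Real.log_div (ne_of_gt p1) (ne_of_gt p2)]
  obtain ⟨c, ⟨hc, hceq⟩, huniq⟩ := hk
  refine ⟨c, ⟨hc, ?_⟩, ?_⟩
  · rw [hcongr c hc.le]; exact hceq
  · rintro y ⟨hy, hyeq⟩
    apply huniq
    refine ⟨hy, ?_⟩
    rw [← hcongr y hy.le]; exact hyeq
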